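/- arXiv:1808.05457 — 3 statements merged into one kernel-verified Lean document; each statement's English description precedes it below -/
import Mathlib

section
/- Let V be a real inner product space, let R > 0, and let x₀, x, y ∈ V satisfy ‖x₀‖ = R, ‖x‖ < R, ‖y − x₀‖ = ‖x − x₀‖, and angle(x − x₀, y − x₀) = 2·arccos(‖x − x₀‖/(2R)). Then ‖y‖ ≥ R. (In particular, any rotation centered at a boundary point x₀ of the open ball B_R of radius R centered at the origin, through the angle θ(r) ∈ [0,π] determined by cos(θ(r)/2) = r/(2R) where r is the distance from x₀ to a point x ∈ B_R, sends x outside B_R.) -/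
set_option maxHeartbeats 1000000 in
/-- **Elementary displacement lemma.** If `x₀` lies on the sphere of radius `R` centered at
the origin, `x` lies in the open ball of radius `R`, and `y` is obtained from `x` by a
rotation centered at `x₀` (i.e. `‖y − x₀‖ = ‖x − x₀‖`) through the angle
`θ(r) = 2·arccos(r/(2R))` where `r = ‖x − x₀‖`, then `y` lies outside the open ball of
radius `R` centered at the origin. -/
theorem rotation_by_theta_displaces {V : Type*} [NormedAddCommGroup V]
    [InnerProductSpace ℝ V] (R : ℝ) (hR : 0 < R) (x₀ x y : V)
    (hx₀ : ‖x₀‖ = R) (hx : ‖x‖ < R)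
    (hdist : ‖y - x₀‖ = ‖x - x₀‖)
    (hangle : InnerProductGeometry.angle (x - x₀) (y - x₀)
      = 2 * Real.arccos (‖x - x₀‖ / (2 * R))) :
    R ≤ ‖y‖ := by
  set u := x - x₀ with hu
  set v := y - x₀ with hv
  set r := ‖u‖ with hrdef
  have hr0 : 0 < r := by
    rw [hrdef, hu, norm_pos_iff, sub_ne_zero]
    intro h
    rw [h, hx₀] at hx
    exact lt_irrefl _ hx
  have hr2R : r < 2 * R := by
    have : r ≤ ‖x‖ + ‖x₀‖ := by rw [hrdef, hu]; exact norm_sub_le _ _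
    rw [hx₀] at this
    linarith
  have hq1 : r / (2 * R) ≤ 1 := by
    rw [div_le_one (by linarith)]; linarith
  have hq0 : 0 ≤ r / (2 * R) := by positivity
  have hcos : Real.cos (InnerProductGeometry.angle u v)
      = 2 * (r / (2 * R))^2 - 1 := by
    rw [hangle, Real.cos_two_mul, Real.cos_arccos (by linarith) hq1]
  have hc : (inner ℝ u v : ℝ) = r * r * (2 * (r / (2 * R))^2 - 1) := by
    have h := InnerProductGeometry.cos_angle u v
    rw [hcos, hdist, ← hrdef, eq_div_iff (by positivity : r * r ≠ 0)] at h
    linarith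
  have hxeq : x = x₀ + u := by rw [hu]; abel
  have hyeq : y = x₀ + v := by rw [hv]; abel
  have hxsq : ‖x‖^2 = R^2 + 2 * (inner ℝ x₀ u : ℝ) + r^2 := by
    rw [hxeq, norm_add_sq_real, hx₀, ← hrdef]
  have hysq : ‖y‖^2 = R^2 + 2 * (inner ℝ x₀ v : ℝ) + r^2 := by
    rw [hyeq, norm_add_sq_real, hx₀, hdist]
  have hxlt : ‖x‖^2 < R^2 := by nlinarith [norm_nonneg x]
  set t : ℝ := r^2 / R^2 with ht
  have ht0 : 0 < t := by positivity
  have hkey : (0:ℝ) ≤ ‖t • x₀ + (u + v)‖^2 := sq_nonneg _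
  have hexp : ‖t • x₀ + (u + v)‖^2
      = t^2 * R^2 + 2 * t * ((inner ℝ x₀ u : ℝ) + (inner ℝ x₀ v : ℝ))
        + (r^2 + 2 * (inner ℝ u v : ℝ) + r^2) := by
    rw [norm_add_sq_real, norm_add_sq_real u v, norm_smul, real_inner_smul_left,
      inner_add_right, hx₀, hdist, ← hrdef, Real.norm_eq_abs, abs_of_nonneg (le_of_lt ht0)]
    ring
  rw [hexp] at hkey
  have hRne : (R:ℝ) ≠ 0 := ne_of_gt hR
  have hc' : (inner ℝ u v : ℝ) = t * r^2 / 2 - r^2 := by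
    rw [hc, ht]; field_simp
  have hsub1 : t^2 * R^2 = t * r^2 := by rw [ht]; field_simp
  rw [hc', hsub1] at hkey
  -- hkey : 0 ≤ t*r² + 2t(a+b) + (r² + 2(t r²/2 − r²) + r²) = 2t(a+b+r²)
  have h2 : 2 * t * 0 ≤ 2 * t * ((inner ℝ x₀ u : ℝ) + (inner ℝ x₀ v : ℝ) + r^2) := by
    nlinarith [hkey]
  have hab : (0:ℝ) ≤ (inner ℝ x₀ u : ℝ) + (inner ℝ x₀ v : ℝ) + r^2 :=
    le_of_mul_le_mul_left h2 (by linarith)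
  have hR2 : R^2 ≤ ‖y‖^2 := by rw [hysq]; linarith
  nlinarith [norm_nonneg y, hR2]
end

section
/- Let m ≥ 1, R > 0, and for x ∈ ℂᵐ with ‖x‖ < 2R set θ(x) := 2·arccos(‖x‖/(2R)) ∈ [0,π]. Then for all c, x ∈ ℂᵐ with ‖c‖ = R and ‖x − c‖ < R (so that ‖x‖ < 2R), the rotated point e^{iθ(x)}·x (complex scalar multiplication by exp(θ(x)·i) on each coordinate) satisfies ‖e^{iθ(x)}·x − c‖ ≥ R. In other words, the map x ↦ e^{iθ(x)}·x sends the open ball of radius R centered at c entirely outside that ball, for any ball of radius R whose boundary passes through the origin. -/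
set_option maxHeartbeats 1000000


/-- **Displacement property of the radial rotation.** For `x ∈ ℂᵐ` with `‖x‖ < 2R`, let
`θ(x) = 2·arccos(‖x‖/(2R))`. Then the map `x ↦ e^{iθ(x)}·x` sends any open ball of radius
`R` whose boundary sphere passes through the origin entirely outside that ball. -/
theorem radial_rotation_displaces (m : ℕ) (hm : 1 ≤ m) (R : ℝ) (hR : 0 < R)
    (c x : EuclideanSpace ℂ (Fin m)) (hc : ‖c‖ = R) (hx : ‖x - c‖ < R) :
    R ≤ ‖Complex.exp (((2 * Real.arccos (‖x‖ / (2 * R)) : ℝ) : ℂ) * Complex.I) • x - c‖ := by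
  set r : ℝ := ‖x‖ with hr
  have hr0 : 0 ≤ r := norm_nonneg x
  have hr2R : r < 2 * R := by
    have h1 : r ≤ ‖x - c‖ + ‖c‖ := by
      calc r = ‖(x - c) + c‖ := by rw [sub_add_cancel]
        _ ≤ ‖x - c‖ + ‖c‖ := norm_add_le _ _
    rw [hc] at h1
    linarith
  set t : ℝ := r / (2 * R) with ht
  have ht0 : 0 ≤ t := div_nonneg hr0 (by linarith)
  have ht1 : t ≤ 1 := (div_le_one (by linarith)).mpr hr2R.le
  have hrt : r = 2 * R * t := by rw [ht]; field_simp
  set s : ℝ := Real.sqrt (1 - t ^ 2) with hs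
  have hs0 : 0 ≤ s := Real.sqrt_nonneg _
  have hts : t ^ 2 + s ^ 2 = 1 := by
    rw [hs, Real.sq_sqrt (by nlinarith)]; ring
  set θ : ℝ := 2 * Real.arccos t with hθ
  have hcos : Real.cos θ = 2 * t ^ 2 - 1 := by
    rw [hθ, Real.cos_two_mul, Real.cos_arccos (by linarith) ht1]
  have hsin : Real.sin θ = 2 * s * t := by
    rw [hθ, Real.sin_two_mul, Real.sin_arccos, Real.cos_arccos (by linarith) ht1, ← hs]
  set w : ℂ := Complex.exp ((θ : ℂ) * Complex.I) with hw
  have hwre : w.re = Real.cos θ := by rw [hw, Complex.exp_ofReal_mul_I_re]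
  have hwim : w.im = Real.sin θ := by rw [hw, Complex.exp_ofReal_mul_I_im]
  have hwnorm : ‖w‖ = 1 := by
    rw [hw, Complex.norm_exp_ofReal_mul_I]
  set z : ℂ := (inner ℂ x c : ℂ) with hz
  set A : ℝ := z.re with hA
  set B : ℝ := z.im with hB
  have hzsq : A ^ 2 + B ^ 2 = ‖z‖ ^ 2 := by
    rw [Complex.sq_norm, Complex.normSq_apply, hA, hB]; ring
  have hzle : ‖z‖ ≤ r * R := by
    calc ‖z‖ ≤ ‖x‖ * ‖c‖ := norm_inner_le_norm x c
      _ = r * R := by rw [hc]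
  -- Lower bound on A from ‖x - c‖ < R
  have hexp1 : ‖x - c‖ ^ 2 = ‖x‖ ^ 2 - 2 * Complex.re (inner ℂ x c : ℂ) + ‖c‖ ^ 2 :=
    @norm_sub_sq ℂ _ _ _ _ x c
  have hAlb : r ^ 2 / 2 < A := by
    have h2 : ‖x - c‖ ^ 2 < R ^ 2 := by
      have := norm_nonneg (x - c)
      nlinarith
    rw [hexp1, hc] at h2
    rw [hA, hz]
    nlinarith
  -- Cauchy-Schwarz in ℝ²: t*A + s*B ≤ ‖z‖
  have hCS : t * A + s * B ≤ r * R := by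
    have h1 : (t * A + s * B) ^ 2 ≤ (t ^ 2 + s ^ 2) * (A ^ 2 + B ^ 2) := by
      nlinarith [sq_nonneg (t * B - s * A)]
    rw [hts, one_mul, hzsq] at h1
    have hzn : 0 ≤ ‖z‖ := norm_nonneg z
    nlinarith
  -- Key inequality on the real part of the rotated inner product
  have hkey : Real.cos θ * A + Real.sin θ * B ≤ r ^ 2 / 2 := by
    rw [hcos, hsin]
    nlinarith [mul_le_mul_of_nonneg_left hCS (by linarith : (0:ℝ) ≤ 2 * t)]
  -- Expand the goal norm
  have hexp2 : ‖w • x - c‖ ^ 2 = ‖w • x‖ ^ 2 - 2 * Complex.re (inner ℂ (w • x) c : ℂ) + ‖c‖ ^ 2 :=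
    @norm_sub_sq ℂ _ _ _ _ (w • x) c
  have hnwx : ‖w • x‖ = r := by rw [norm_smul, hwnorm, one_mul]
  have hinner : Complex.re (inner ℂ (w • x) c : ℂ) = Real.cos θ * A + Real.sin θ * B := by
    have h1 : (inner ℂ (w • x) c : ℂ) = (starRingEnd ℂ) w * z := by
      rw [hz, inner_smul_left]
    rw [h1, Complex.mul_re, Complex.conj_re, Complex.conj_im, hwre, hwim, hA, hB]
    ring
  have hsq : R ^ 2 ≤ ‖w • x - c‖ ^ 2 := by
    rw [hexp2, hnwx, hc, hinner]
    nlinarith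
  have hn : 0 ≤ ‖w • x - c‖ := norm_nonneg _
  nlinarith
end

section
/- Let n ≥ 1 and define τ̂ : (ℝⁿ × ℝⁿ × ℝ) × (ℝⁿ × ℝⁿ × ℝ) × ℝ → (ℝ^{2n+1}) × (ℝ^{2n+1}) × ℝ by τ̂(q,p,z;Q,P,Z;θ) = ( ((q+Q)/2, (e^θ p + P)/2, z), (P − e^θ p, q − Q, e^θ − 1), (1/2)·⟪e^θ p + P, q − Q⟫ + Z − z ). Then τ̂ is injective, and its image is exactly the set of all ((x,y,z̄),(u,v,w),a) ∈ ℝ^{2n+1} × ℝ^{2n+1} × ℝ with w > −1; i.e. τ̂ is a bijection onto ℝ^{2n+1} × (ℝ^{2n} × (−1,∞)) × ℝ. -/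
noncomputable section

/-- The contact identification
`τ̂(q,p,z;Q,P,Z;θ) = (((q+Q)/2, (e^θ p + P)/2, z), (P − e^θ p, q − Q, e^θ − 1),
(1/2)⟪e^θ p + P, q − Q⟫ + Z − z)`,
from `J¹ℝⁿ × J¹ℝⁿ × ℝ` to `J¹ℝ^{2n+1} = ℝ^{2n+1} × ℝ^{2n+1} × ℝ`, where each copy of
`ℝ^{2n+1}` is written as `ℝⁿ × ℝⁿ × ℝ`. -/
def tauHat (n : ℕ) :
    ((EuclideanSpace ℝ (Fin n) × EuclideanSpace ℝ (Fin n) × ℝ) ×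
      (EuclideanSpace ℝ (Fin n) × EuclideanSpace ℝ (Fin n) × ℝ) × ℝ) →
    ((EuclideanSpace ℝ (Fin n) × EuclideanSpace ℝ (Fin n) × ℝ) ×
      (EuclideanSpace ℝ (Fin n) × EuclideanSpace ℝ (Fin n) × ℝ) × ℝ) :=
  fun w =>
    let q := w.1.1; let p := w.1.2.1; let z := w.1.2.2
    let Q := w.2.1.1; let P := w.2.1.2.1; let Z := w.2.1.2.2
    let θ := w.2.2
    (((1 / 2 : ℝ) • (q + Q), ((1 / 2 : ℝ) • (Real.exp θ • p + P), z)),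
      ((P - Real.exp θ • p, (q - Q, Real.exp θ - 1)),
        (1 / 2 : ℝ) * (inner ℝ (Real.exp θ • p + P) (q - Q) : ℝ) + Z - z))

/-- `τ̂` is injective and its image is exactly the open set of all
`((x,y,z̄),(u,v,w),a)` with `w > −1`; i.e. `τ̂` is a bijection onto
`ℝ^{2n+1} × (ℝ^{2n} × (−1,∞)) × ℝ`. -/
theorem tauHat_injective_range (n : ℕ) (hn : 1 ≤ n) :
    Function.Injective (tauHat n) ∧
      Set.range (tauHat n) = {y : (EuclideanSpace ℝ (Fin n) × EuclideanSpace ℝ (Fin n) × ℝ) ×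
        (EuclideanSpace ℝ (Fin n) × EuclideanSpace ℝ (Fin n) × ℝ) × ℝ |
          -1 < y.2.1.2.2} := by
  constructor
  · rintro ⟨⟨q, p, z⟩, ⟨Q, P, Z⟩, θ⟩ ⟨⟨q', p', z'⟩, ⟨Q', P', Z'⟩, θ'⟩ h
    simp only [tauHat, Prod.mk.injEq] at h
    obtain ⟨⟨h1, h2, h3⟩, ⟨h4, h5, h6⟩, h7⟩ := h
    have hθ : θ = θ' := Real.exp_injective (by linarith)
    subst hθ h3
    have hq : q = q' ∧ Q = Q' := by
      have hs : q + Q = q' + Q' := by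
        have := congrArg (fun x => (2 : ℝ) • x) h1
        simpa [smul_smul] using this
      constructor
      · have : (2 : ℝ) • q = (2 : ℝ) • q' := by
          have := congrArg₂ (· + ·) hs h5
          calc (2 : ℝ) • q = q + Q + (q - Q) := by module
          _ = q' + Q' + (q' - Q') := this
          _ = (2 : ℝ) • q' := by module
        exact smul_right_injective _ two_ne_zero this
      · have : (2 : ℝ) • Q = (2 : ℝ) • Q' := by
          have := congrArg₂ (· - ·) hs h5
          calc (2 : ℝ) • Q = q + Q - (q - Q) := by module
          _ = q' + Q' - (q' - Q') := this
          _ = (2 : ℝ) • Q' := by module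
        exact smul_right_injective _ two_ne_zero this
    obtain ⟨hq1, hq2⟩ := hq
    subst hq1 hq2
    have hp : Real.exp θ • p = Real.exp θ • p' ∧ P = P' := by
      have hs : Real.exp θ • p + P = Real.exp θ • p' + P' := by
        have := congrArg (fun x => (2 : ℝ) • x) h2
        simpa [smul_smul] using this
      constructor
      · have : (2 : ℝ) • (Real.exp θ • p) = (2 : ℝ) • (Real.exp θ • p') := by
          have := congrArg₂ (· - ·) hs h4
          calc (2 : ℝ) • (Real.exp θ • p) =
              Real.exp θ • p + P - (P - Real.exp θ • p) := by module
          _ = Real.exp θ • p' + P' - (P' - Real.exp θ • p') := this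
          _ = (2 : ℝ) • (Real.exp θ • p') := by module
        exact smul_right_injective _ two_ne_zero this
      · have : (2 : ℝ) • P = (2 : ℝ) • P' := by
          have := congrArg₂ (· + ·) hs h4
          calc (2 : ℝ) • P = Real.exp θ • p + P + (P - Real.exp θ • p) := by module
          _ = Real.exp θ • p' + P' + (P' - Real.exp θ • p') := this
          _ = (2 : ℝ) • P' := by module
        exact smul_right_injective _ two_ne_zero this
    obtain ⟨hp1, hp2⟩ := hp
    have hp1' : p = p' := smul_right_injective _ (Real.exp_ne_zero θ) hp1
    subst hp1' hp2
    have hZ : Z = Z' := by linarith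
    subst hZ
    rfl
  · ext y
    obtain ⟨⟨x, y', zb⟩, ⟨u, v, w⟩, a⟩ := y
    simp only [Set.mem_range, Set.mem_setOf_eq]
    constructor
    · rintro ⟨⟨⟨q, p, z⟩, ⟨Q, P, Z⟩, θ⟩, h⟩
      simp only [tauHat, Prod.mk.injEq] at h
      obtain ⟨-, ⟨-, -, h6⟩, -⟩ := h
      simp only [← h6]
      linarith [Real.exp_pos θ]
    · intro hw
      have hw0 : (0 : ℝ) < 1 + w := by linarith
      set θ := Real.log (1 + w) with hθ
      have he : Real.exp θ = 1 + w := Real.exp_log hw0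
      refine ⟨⟨⟨x + (1 / 2 : ℝ) • v, (1 + w)⁻¹ • (y' - (1 / 2 : ℝ) • u), zb⟩,
        ⟨x - (1 / 2 : ℝ) • v, y' + (1 / 2 : ℝ) • u,
          a + zb - (1 / 2 : ℝ) * (inner ℝ ((2 : ℝ) • y') v : ℝ)⟩, θ⟩, ?_⟩
      have hep : Real.exp θ • ((1 + w)⁻¹ • (y' - (1 / 2 : ℝ) • u)) = y' - (1 / 2 : ℝ) • u := by
        rw [he, smul_smul, mul_inv_cancel₀ hw0.ne', one_smul]
      simp only [tauHat, hep, Prod.mk.injEq]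
      refine ⟨⟨by module, by module, trivial⟩, ⟨by module, by module, by rw [he]; ring⟩, ?_⟩
      have harg1 : y' - (1 / 2 : ℝ) • u + (y' + (1 / 2 : ℝ) • u) = (2 : ℝ) • y' := by module
      have harg2 : x + (1 / 2 : ℝ) • v - (x - (1 / 2 : ℝ) • v) = v := by module
      rw [harg1, harg2]
      ring
end
end
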